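/- arXiv:2005.01471 — 2 statements merged into one kernel-verified Lean document; each statement's English description precedes it below -/
import Mathlib

section
/- Let 0 < m < 1 and a ∈ ℂ satisfy Assumption (A). Then there exists b ∈ ℂ with |b| = 1, Re(b) > 0 and Im(b) < 0 such that 2√m·Im(ab) > (1−m)·Re(ab) and Re(ab) ≥ 0. In particular, the product ab again satisfies Assumption (A). -/
open MeasureTheory Set Filter
open scoped ENNReal Topology

noncomputable section

/-- Under Assumption (A) on `m` and `a`, there exists `b ∈ ℂ` with
`|b| = 1`, `Re b > 0`, `Im b < 0`, such that `2√m · Im(ab) > (1−m) · Re(ab)` and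
`Re(ab) ≥ 0`; in particular `ab` again satisfies Assumption (A). -/
theorem statement0 (m : ℝ) (a : ℂ) (hm0 : 0 < m) (hm1 : m < 1)
    (hA1 : (1 - m) * |a.re| ≤ 2 * Real.sqrt m * a.im)
    (hA2 : 0 ≤ a.re → (1 - m) * a.re < 2 * Real.sqrt m * a.im) :
    ∃ b : ℂ, ‖b‖ = 1 ∧ 0 < b.re ∧ b.im < 0 ∧
      (1 - m) * (a * b).re < 2 * Real.sqrt m * (a * b).im ∧
      0 ≤ (a * b).re ∧
      ((1 - m) * |(a * b).re| ≤ 2 * Real.sqrt m * (a * b).im ∧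
        (0 ≤ (a * b).re → (1 - m) * (a * b).re < 2 * Real.sqrt m * (a * b).im)) := by
  have hs : 0 < Real.sqrt m := Real.sqrt_pos.mpr hm0
  have hm1' : 0 < 1 - m := by linarith
  -- Im a > 0
  have him : 0 < a.im := by
    rcases lt_or_ge 0 a.im with h | h
    · exact h
    · exfalso
      have h2 : (1 - m) * |a.re| ≤ 0 := by nlinarith
      have hre : a.re = 0 := by
        have h3 : |a.re| ≤ 0 := by nlinarith
        exact abs_eq_zero.mp (le_antisymm h3 (abs_nonneg _))
      have := hA2 (le_of_eq hre.symm)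
      rw [hre] at this
      nlinarith
  rcases le_or_gt 0 a.re with hre | hre
  · -- case Re a ≥ 0
    obtain ⟨D, hDdef⟩ : ∃ D : ℝ, D = 2 * Real.sqrt m * a.im - (1 - m) * a.re := ⟨_, rfl⟩
    obtain ⟨E, hEdef⟩ : ∃ E : ℝ, E = 2 * Real.sqrt m * a.re + (1 - m) * a.im := ⟨_, rfl⟩
    have hD : 0 < D := by have := hA2 hre; rw [hDdef]; linarith
    have hE : 0 < E := by
      have h4 : 0 ≤ 2 * Real.sqrt m * a.re := by positivity
      rw [hEdef]; nlinarith
    obtain ⟨N, hNdef⟩ : ∃ N : ℝ, N = Real.sqrt (4 * E ^ 2 + D ^ 2) := ⟨_, rfl⟩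
    have hN : 0 < N := hNdef ▸ Real.sqrt_pos.mpr (by positivity)
    have hN2 : N ^ 2 = 4 * E ^ 2 + D ^ 2 := hNdef ▸ Real.sq_sqrt (by positivity)
    obtain ⟨b, hbdef⟩ : ∃ b : ℂ, b = (⟨2 * E / N, -(D / N)⟩ : ℂ) := ⟨_, rfl⟩
    have hbre : b.re = 2 * E / N := by rw [hbdef]
    have hbim : b.im = -(D / N) := by rw [hbdef]
    have habre : (a * b).re = (2 * E * a.re + D * a.im) / N := by
      rw [Complex.mul_re, hbre, hbim]; ring
    have habim : (a * b).im = (2 * E * a.im - D * a.re) / N := by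
      rw [Complex.mul_im, hbre, hbim]; ring
    have hkey : (1 - m) * (2 * E * a.re + D * a.im) <
        2 * Real.sqrt m * (2 * E * a.im - D * a.re) := by
      have hid : 2 * Real.sqrt m * (2 * E * a.im - D * a.re) -
          (1 - m) * (2 * E * a.re + D * a.im) = E * D := by
        rw [hDdef, hEdef]; ring
      nlinarith [mul_pos hE hD]
    have hstrict : (1 - m) * (a * b).re < 2 * Real.sqrt m * (a * b).im := by
      rw [habre, habim]
      have e1 : (1 - m) * ((2 * E * a.re + D * a.im) / N)
          = ((1 - m) * (2 * E * a.re + D * a.im)) / N := by ring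
      have e2 : 2 * Real.sqrt m * ((2 * E * a.im - D * a.re) / N)
          = (2 * Real.sqrt m * (2 * E * a.im - D * a.re)) / N := by ring
      rw [e1, e2]
      exact div_lt_div_of_pos_right hkey hN  -- may need rename
    have hnn : 0 ≤ (a * b).re := by
      rw [habre]
      have : 0 ≤ 2 * E * a.re + D * a.im := by
        have := mul_nonneg (by positivity : (0:ℝ) ≤ 2 * E) hre
        nlinarith [mul_pos hD him]
      positivity
    refine ⟨b, ?_, ?_, ?_, hstrict, hnn, ?_, fun _ => hstrict⟩
    · rw [Complex.norm_def, Complex.normSq_apply, hbre, hbim]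
      have e : 2 * E / N * (2 * E / N) + -(D / N) * -(D / N)
          = (4 * E ^ 2 + D ^ 2) / N ^ 2 := by ring
      rw [e, ← hN2, div_self (by positivity : (N:ℝ) ^ 2 ≠ 0)]
      exact Real.sqrt_one
    · rw [hbre]; positivity
    · rw [hbim]
      have : 0 < D / N := by positivity
      linarith
    · rw [abs_of_nonneg hnn]; exact le_of_lt hstrict
  · -- case Re a < 0
    obtain ⟨r, hrdef⟩ : ∃ r : ℝ, r = ‖a‖ := ⟨_, rfl⟩
    have ha0 : a ≠ 0 := by
      intro h; rw [h] at him; simp at him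
    have hr : 0 < r := hrdef ▸ norm_pos_iff.mpr ha0
    have hr2 : r ^ 2 = a.re ^ 2 + a.im ^ 2 := by
      rw [hrdef, Complex.sq_norm, Complex.normSq_apply]; ring
    obtain ⟨b, hbdef⟩ : ∃ b : ℂ, b = (⟨a.im / r, a.re / r⟩ : ℂ) := ⟨_, rfl⟩
    have hbre : b.re = a.im / r := by rw [hbdef]
    have hbim : b.im = a.re / r := by rw [hbdef]
    have habre : (a * b).re = 0 := by
      rw [Complex.mul_re, hbre, hbim]; ring
    have habim : (a * b).im = r := by
      rw [Complex.mul_im, hbre, hbim]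
      have e : a.re * (a.re / r) + a.im * (a.im / r) = (a.re ^ 2 + a.im ^ 2) / r := by
        ring
      rw [e, ← hr2, sq, mul_div_assoc, div_self hr.ne', mul_one]
    have hstrict : (1 - m) * (a * b).re < 2 * Real.sqrt m * (a * b).im := by
      rw [habre, habim]
      have : 0 < 2 * Real.sqrt m * r := by positivity
      linarith
    have hnn : 0 ≤ (a * b).re := by rw [habre]
    refine ⟨b, ?_, ?_, ?_, hstrict, hnn, ?_, fun _ => hstrict⟩
    · rw [Complex.norm_def, Complex.normSq_apply, hbre, hbim]
      have e : a.im / r * (a.im / r) + a.re / r * (a.re / r)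
          = (a.re ^ 2 + a.im ^ 2) / r ^ 2 := by ring
      rw [e, ← hr2, div_self (by positivity : (r:ℝ) ^ 2 ≠ 0)]
      exact Real.sqrt_one
    · rw [hbre]; positivity
    · rw [hbim]
      exact div_neg_of_neg_of_pos hre hr
    · rw [abs_of_nonneg hnn]; exact le_of_lt hstrict
end
end

section
/- Let 0 < m < 1 and 1 ≤ p < ∞. There exists a constant C > 0 depending only on m such that for all measurable u, v : ℝ^N → ℂ with ∫|u|^p dx < ∞ and ∫|v|^p dx < ∞, the functions g(u) and g(v) belong to L^{p/m}(ℝ^N;ℂ), ‖g(u)‖_{L^{p/m}} = ‖u‖_{L^p}^m, and ‖g(u) − g(v)‖_{L^{p/m}} ≤ C·‖u − v‖_{L^p}^m. In particular, u ↦ g(u) is continuous from L^p(ℝ^N;ℂ) to L^{p/m}(ℝ^N;ℂ) and maps bounded sets to bounded sets. -/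
open MeasureTheory Set Filter
open scoped ENNReal Topology

noncomputable section

/-- `g(z) = |z|^(m-1) · z` (so that `g(0) = 0`, since `0 ^ (m-1) = 0` for `m < 1`). -/
def gfun (m : ℝ) (z : ℂ) : ℂ := ((‖z‖ ^ (m - 1) : ℝ) : ℂ) * z

lemma abs_gfun (m : ℝ) (hm0 : 0 < m) (z : ℂ) :
    ‖gfun m z‖ = ‖z‖ ^ m := by
  by_cases hz : z = 0
  · simp [gfun, hz, Real.zero_rpow hm0.ne']
  · have hz' : 0 < ‖z‖ := by simpa [norm_pos_iff] using hz
    rw [gfun, norm_mul, Complex.norm_real, Real.norm_eq_abs,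
      abs_of_nonneg (Real.rpow_nonneg (norm_nonneg z) _)]
    rw [← Real.rpow_add_one hz'.ne' (m - 1)]
    ring_nf

lemma lemA (m : ℝ) (hm0 : 0 < m) {s t : ℝ} (hs : 0 < s) (hst : s ≤ t) :
    s ^ m - s * t ^ (m - 1) ≤ (t - s) * s ^ (m - 1) := by
  have ht : 0 < t := hs.trans_le hst
  set r := t / s with hr
  have hr1 : 1 ≤ r := (one_le_div hs).2 hst
  have hrpos : 0 < r := lt_of_lt_of_le one_pos hr1
  have hts : t = r * s := by rw [hr, div_mul_cancel₀ t hs.ne']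
  have hss : s ^ (m - 1) * s = s ^ m := by
    rw [← Real.rpow_add_one hs.ne' (m - 1)]; ring_nf
  have h1 : t * s ^ (m - 1) = r * s ^ m := by rw [hts]; rw [← hss]; ring
  have h2 : s * t ^ (m - 1) = r ^ (m - 1) * s ^ m := by
    rw [hts, Real.mul_rpow hrpos.le hs.le, ← hss]; ring
  have h3 : r⁻¹ ≤ r ^ (m - 1) := by
    rw [← Real.rpow_neg_one r]
    exact Real.rpow_le_rpow_of_exponent_le hr1 (by linarith)
  have h4 : 2 ≤ r + r⁻¹ := by
    nlinarith [mul_inv_cancel₀ hrpos.ne', sq_nonneg (r - 1)]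
  have hsm : 0 < s ^ m := Real.rpow_pos_of_pos hs m
  nlinarith [mul_le_mul_of_nonneg_right (add_le_add_left h3 r) hsm.le]

lemma gfun_lip_aux (m : ℝ) (hm0 : 0 < m) (hm1 : m < 1) (a b : ℂ)
    (hba : ‖b‖ ≤ ‖a‖) :
    ‖gfun m a - gfun m b‖ ≤ 3 * ‖a - b‖ ^ m := by
  set s := ‖b‖ with hsdef
  set t := ‖a‖ with htdef
  set d := ‖a - b‖ with hddef
  have hd0 : 0 ≤ d := norm_nonneg _
  rcases eq_or_lt_of_le hd0 with hd | hd
  · -- d = 0 : a = b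
    have hab : a = b := sub_eq_zero.1 (norm_eq_zero.1 hd.symm)
    rw [hab, sub_self, norm_zero, ← hd, Real.zero_rpow hm0.ne']
    norm_num
  -- now 0 < d
  have hdts : d ≤ t + s := by
    simpa [htdef, hsdef, hddef] using norm_sub_le a b
  have ht : 0 < t := by linarith
  have hd2t : d ≤ 2 * t := by linarith
  -- bound for the first term
  have hterm1 : t ^ (m - 1) * d ≤ 2 * d ^ m := by
    have h1 : t ^ (m - 1) ≤ (d / 2) ^ (m - 1) :=
      Real.rpow_le_rpow_of_nonpos (by linarith) (by linarith) (by linarith)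
    have h2 : (d / 2) ^ (m - 1) = d ^ (m - 1) / 2 ^ (m - 1) :=
      Real.div_rpow hd.le (by norm_num : (0:ℝ) ≤ 2) (m - 1)
    have hdd : d ^ (m - 1) * d = d ^ m := by
      rw [← Real.rpow_add_one hd.ne' (m - 1)]; ring_nf
    have hc : (0:ℝ) < 2 ^ (m - 1) := Real.rpow_pos_of_pos two_pos _
    have hcinv : ((2:ℝ) ^ (m - 1))⁻¹ = 2 ^ (1 - m) := by
      rw [← Real.rpow_neg (by norm_num : (0:ℝ) ≤ 2), neg_sub]
    have h4 : (2:ℝ) ^ (1 - m) ≤ 2 := by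
      calc (2:ℝ) ^ (1 - m) ≤ 2 ^ (1:ℝ) :=
            Real.rpow_le_rpow_of_exponent_le one_le_two (by linarith)
        _ = 2 := Real.rpow_one 2
    have hdm : 0 ≤ d ^ m := Real.rpow_nonneg hd.le m
    calc t ^ (m - 1) * d ≤ (d / 2) ^ (m - 1) * d := mul_le_mul_of_nonneg_right h1 hd.le
      _ = d ^ m * ((2:ℝ) ^ (m - 1))⁻¹ := by
          rw [h2, div_mul_eq_mul_div, hdd, div_eq_mul_inv]
      _ ≤ d ^ m * 2 := by
          rw [hcinv]; exact mul_le_mul_of_nonneg_left h4 hdm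
      _ = 2 * d ^ m := mul_comm _ _
  rcases eq_or_lt_of_le (norm_nonneg b) with hs | hs
  · -- b = 0
    have hb0 : b = 0 := norm_eq_zero.1 hs.symm
    have hg0 : gfun m (0:ℂ) = 0 := by simp [gfun]
    have hdt : d = t := by rw [hddef, htdef, hb0, sub_zero]
    rw [hb0, hg0, sub_zero, abs_gfun m hm0, hdt]
    have : 0 ≤ t ^ m := Real.rpow_nonneg (norm_nonneg a) m
    linarith
  · have hs' : 0 < s := hs
    have hst1 : t ^ (m - 1) ≤ s ^ (m - 1) :=
      Real.rpow_le_rpow_of_nonpos hs' hba (by linarith)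
    have hdecomp : gfun m a - gfun m b
        = ((t ^ (m - 1) : ℝ) : ℂ) * (a - b) + (((t ^ (m - 1) - s ^ (m - 1)) : ℝ) : ℂ) * b := by
      simp only [gfun, ← htdef, ← hsdef]; push_cast; ring
    have habs : ‖gfun m a - gfun m b‖
        ≤ t ^ (m - 1) * d + (s ^ (m - 1) - t ^ (m - 1)) * s := by
      rw [hdecomp]
      refine le_trans (norm_add_le _ _) ?_
      rw [norm_mul, norm_mul, Complex.norm_real, Complex.norm_real, Real.norm_eq_abs,
          Real.norm_eq_abs]
      have e1 : |t ^ (m - 1)| = t ^ (m - 1) :=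
        abs_of_nonneg (Real.rpow_nonneg (norm_nonneg a) _)
      have e2 : |t ^ (m - 1) - s ^ (m - 1)| = s ^ (m - 1) - t ^ (m - 1) := by
        rw [abs_sub_comm]; exact abs_of_nonneg (by linarith)
      rw [e1, e2, ← hddef, ← hsdef]
    have hterm2 : (s ^ (m - 1) - t ^ (m - 1)) * s ≤ d ^ m := by
      have hss : s ^ (m - 1) * s = s ^ m := by
        rw [← Real.rpow_add_one hs'.ne' (m - 1)]; ring_nf
      rcases le_or_gt d s with hds | hds
      · have hA := lemA m hm0 hs' hba
        have e : (s ^ (m - 1) - t ^ (m - 1)) * s = s ^ m - s * t ^ (m - 1) := by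
          rw [sub_mul, hss]; ring
        have hts2 : t - s ≤ d := by
          simpa [htdef, hsdef, hddef] using norm_sub_norm_le a b
        have hsd : s ^ (m - 1) ≤ d ^ (m - 1) :=
          Real.rpow_le_rpow_of_nonpos hd hds (by linarith)
        have hdd : d * d ^ (m - 1) = d ^ m := by
          rw [mul_comm, ← Real.rpow_add_one hd.ne' (m - 1)]; ring_nf
        calc (s ^ (m - 1) - t ^ (m - 1)) * s = s ^ m - s * t ^ (m - 1) := e
          _ ≤ (t - s) * s ^ (m - 1) := hA
          _ ≤ d * d ^ (m - 1) :=
              mul_le_mul hts2 hsd (Real.rpow_nonneg hs'.le _) hd.le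
          _ = d ^ m := hdd
      · have h1 : (s ^ (m - 1) - t ^ (m - 1)) * s ≤ s ^ (m - 1) * s :=
          mul_le_mul_of_nonneg_right
            (by linarith [Real.rpow_nonneg (norm_nonneg a) (m - 1)]) hs'.le
        have h2 : s ^ m ≤ d ^ m := Real.rpow_le_rpow hs'.le hds.le hm0.le
        linarith
    linarith

lemma gfun_lip (m : ℝ) (hm0 : 0 < m) (hm1 : m < 1) (a b : ℂ) :
    ‖gfun m a - gfun m b‖ ≤ 3 * ‖a - b‖ ^ m := by
  rcases le_total (‖b‖) (‖a‖) with h | h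
  · exact gfun_lip_aux m hm0 hm1 a b h
  · rw [← norm_neg (gfun m a - gfun m b), neg_sub,
      ← norm_neg (a - b), neg_sub]
    exact gfun_lip_aux m hm0 hm1 b a h


lemma measurable_gfun (m : ℝ) : Measurable (gfun m) := by
  have h1 : Measurable fun z : ℂ => ‖z‖ ^ (m - 1) := by
    have : Measurable fun z : ℂ => ‖z‖ := continuous_norm.measurable
    fun_prop
  exact (Complex.measurable_ofReal.comp h1).mul measurable_id

lemma eLpNorm_abs_rpow {α : Type*} [MeasurableSpace α] (μ : Measure α) (w : α → ℂ)
    (m p : ℝ) (hm0 : 0 < m) (hp : 0 ≤ p) :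
    eLpNorm (fun x => ‖w x‖ ^ m) (ENNReal.ofReal (p / m)) μ
      = eLpNorm w (ENNReal.ofReal p) μ ^ m := by
  rw [eLpNorm_norm_rpow w hm0, ← ENNReal.ofReal_mul (by positivity),
    div_mul_cancel₀ p hm0.ne']

lemma eLpNorm_gfun {α : Type*} [MeasurableSpace α] (μ : Measure α) (w : α → ℂ)
    (m p : ℝ) (hm0 : 0 < m) (hp : 0 ≤ p) :
    eLpNorm (fun x => gfun m (w x)) (ENNReal.ofReal (p / m)) μ
      = eLpNorm w (ENNReal.ofReal p) μ ^ m := by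
  have h := eLpNorm_congr_norm_ae (μ := μ) (p := ENNReal.ofReal (p / m))
      (f := fun x => gfun m (w x)) (g := fun x => ‖w x‖ ^ m)
      (Eventually.of_forall fun x => by
        simp only [Real.norm_eq_abs]
        rw [abs_gfun m hm0,
          abs_of_nonneg (Real.rpow_nonneg (norm_nonneg _) m)])
  rw [h, eLpNorm_abs_rpow μ w m p hm0 hp]

/-- For `0 < m < 1` there is a constant `C > 0` depending only on `m`
such that for every `N ≥ 1`, every `1 ≤ p < ∞` and all `u, v ∈ L^p(ℝ^N; ℂ)`:
`g(u) ∈ L^(p/m)`, `‖g(u)‖_(p/m) = ‖u‖_p ^ m`, and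
`‖g(u) − g(v)‖_(p/m) ≤ C · ‖u − v‖_p ^ m`.  In particular `u ↦ g(u)` is continuous
from `L^p` to `L^(p/m)` and maps bounded sets to bounded sets. -/
theorem statement1 (m : ℝ) (hm0 : 0 < m) (hm1 : m < 1) :
    ∃ C : ℝ, 0 < C ∧ ∀ (N : ℕ), 1 ≤ N → ∀ p : ℝ, 1 ≤ p →
      ∀ u v : (Fin N → ℝ) → ℂ,
        MemLp u (ENNReal.ofReal p) volume → MemLp v (ENNReal.ofReal p) volume →
        MemLp (fun x => gfun m (u x)) (ENNReal.ofReal (p / m)) volume ∧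
        MemLp (fun x => gfun m (v x)) (ENNReal.ofReal (p / m)) volume ∧
        (eLpNorm (fun x => gfun m (u x)) (ENNReal.ofReal (p / m)) volume).toReal
          = (eLpNorm u (ENNReal.ofReal p) volume).toReal ^ m ∧
        (eLpNorm (fun x => gfun m (u x) - gfun m (v x)) (ENNReal.ofReal (p / m)) volume).toReal
          ≤ C * (eLpNorm (fun x => u x - v x) (ENNReal.ofReal p) volume).toReal ^ m := by
  refine ⟨3, by norm_num, ?_⟩
  intro N _ p hp u v hu hv
  have hp0 : (0:ℝ) ≤ p := by linarith
  have hmem : ∀ w : (Fin N → ℝ) → ℂ, MemLp w (ENNReal.ofReal p) volume →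
      MemLp (fun x => gfun m (w x)) (ENNReal.ofReal (p / m)) volume := by
    intro w hw
    refine ⟨((measurable_gfun m).comp_aemeasurable
      hw.aestronglyMeasurable.aemeasurable).aestronglyMeasurable, ?_⟩
    rw [eLpNorm_gfun volume w m p hm0 hp0]
    exact ENNReal.rpow_lt_top_of_nonneg hm0.le hw.2.ne
  refine ⟨hmem u hu, hmem v hv, ?_, ?_⟩
  · rw [eLpNorm_gfun volume u m p hm0 hp0, ← ENNReal.toReal_rpow]
  · have hsub : MemLp (fun x => u x - v x) (ENNReal.ofReal p) volume := hu.sub hv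
    have key : eLpNorm (fun x => gfun m (u x) - gfun m (v x)) (ENNReal.ofReal (p / m)) volume
        ≤ (‖(3:ℝ)‖₊ : ℝ≥0∞) * eLpNorm (fun x => u x - v x) (ENNReal.ofReal p) volume ^ m := by
      have hsmul : (fun x => (3:ℝ) * ‖u x - v x‖ ^ m)
          = (3:ℝ) • (fun x => ‖u x - v x‖ ^ m) := by
        funext x; simp [Pi.smul_apply, smul_eq_mul]
      calc eLpNorm (fun x => gfun m (u x) - gfun m (v x)) (ENNReal.ofReal (p / m)) volume
          ≤ eLpNorm (fun x => (3:ℝ) * ‖u x - v x‖ ^ m) (ENNReal.ofReal (p / m)) volume :=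
            eLpNorm_mono_real (fun x => by
              simpa using gfun_lip m hm0 hm1 (u x) (v x))
        _ = (‖(3:ℝ)‖₊ : ℝ≥0∞)
              * eLpNorm (fun x => ‖u x - v x‖ ^ m) (ENNReal.ofReal (p / m)) volume := by
            rw [hsmul, eLpNorm_const_smul, enorm_eq_nnnorm]
        _ = (‖(3:ℝ)‖₊ : ℝ≥0∞)
              * eLpNorm (fun x => u x - v x) (ENNReal.ofReal p) volume ^ m := by
            rw [eLpNorm_abs_rpow volume (fun x => u x - v x) m p hm0 hp0]
    have hfin : eLpNorm (fun x => u x - v x) (ENNReal.ofReal p) volume ≠ ∞ := hsub.2.ne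
    have hrhs : (‖(3:ℝ)‖₊ : ℝ≥0∞)
        * eLpNorm (fun x => u x - v x) (ENNReal.ofReal p) volume ^ m ≠ ∞ :=
      ENNReal.mul_ne_top ENNReal.coe_ne_top (ENNReal.rpow_ne_top_of_nonneg hm0.le hfin)
    have h := ENNReal.toReal_mono hrhs key
    rw [ENNReal.toReal_mul, ← ENNReal.toReal_rpow] at h
    simpa using h
end
end
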